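/- Let f(x) = Σ_{n≥1} a_n x^(2n-1) where a_n is the number of full binary trees with n leaves avoiding the left comb with 4 leaves (so a_n = M(n-1), a Motzkin number). Then the coefficients satisfy the relation encoded by x^3 f^2 + (x^2 - 1) f + x = 0; equivalently, for all n ≥ 2, a_{n+1} = a_n + Σ_{k=1}^{n-1} a_k a_{n-k}, with a_1 = a_2 = 1. -/

import Mathlib

inductive BTree : Type
  | leaf : BTree
  | node : BTree → BTree → BTree
  deriving DecidableEq

namespace BTree

def leaves : BTree → ℕ
  | leaf => 1
  | node l r => leaves l + leaves r

def Matches : BTree → BTree → Bool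
  | _, leaf => true
  | leaf, node _ _ => false
  | node l r, node tl tr => Matches l tl && Matches r tr

def Contains : BTree → BTree → Bool
  | leaf, t => Matches leaf t
  | node l r, t => Matches (node l r) t || Contains l t || Contains r t

def Avoids (T t : BTree) : Prop := Contains T t = false

end BTree

noncomputable def a (n : ℕ) : ℕ :=
  Nat.card {T : BTree //
    T.leaves = n ∧ T.Avoids (.node (.node (.node .leaf .leaf) .leaf) .leaf)}

open BTree

def P : BTree := .node (.node (.node .leaf .leaf) .leaf) .leaf

lemma avoids_leaf : Avoids .leaf P := rfl

lemma avoids_node_leaf (r : BTree) : Avoids (.node .leaf r) P ↔ Avoids r P := by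
  simp [Avoids, Contains, Matches, P]

lemma avoids_node_node_leaf (s r : BTree) :
    Avoids (.node (.node .leaf s) r) P ↔ Avoids s P ∧ Avoids r P := by
  simp [Avoids, Contains, Matches, P]

lemma not_avoids_bad (u v w r : BTree) : ¬ Avoids (.node (.node (.node u v) w) r) P := by
  simp [Avoids, Contains, Matches, P]

lemma leaves_pos (T : BTree) : 1 ≤ T.leaves := by
  induction T with
  | leaf => simp [leaves]
  | node l r ihl ihr => simp [leaves]; omega

lemma leaves_eq_one {T : BTree} (h : T.leaves = 1) : T = .leaf := by
  cases T with
  | leaf => rfl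
  | node l r => have := leaves_pos l; have := leaves_pos r; simp [leaves] at h; omega

def avoidF : ℕ → Finset BTree
  | 0 => ∅
  | 1 => {.leaf}
  | (n+2) =>
      ((avoidF (n+1)).image (fun r => .node .leaf r)) ∪
      (Finset.Icc 1 n).attach.biUnion (fun k =>
        ((avoidF k.1) ×ˢ (avoidF (n+1-k.1))).image
          (fun p => .node (.node .leaf p.1) p.2))
  termination_by n => n
  decreasing_by
  · omega
  · have := Finset.mem_Icc.mp k.2; omega
  · omega

lemma mem_avoidF : ∀ n (T : BTree), T ∈ avoidF n ↔ T.leaves = n ∧ T.Avoids P := by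
  intro n
  induction n using Nat.strong_induction_on with
  | _ n ih =>
    match n with
    | 0 =>
      intro T
      simp only [avoidF, Finset.notMem_empty, false_iff]
      rintro ⟨h, -⟩
      have := leaves_pos T; omega
    | 1 =>
      intro T
      simp only [avoidF, Finset.mem_singleton]
      constructor
      · rintro rfl; exact ⟨rfl, avoids_leaf⟩
      · rintro ⟨h, -⟩; exact leaves_eq_one h
    | (m+2) =>
      intro T
      rw [avoidF]
      simp only [Finset.mem_union, Finset.mem_image, Finset.mem_biUnion,
        Finset.mem_attach, true_and, Subtype.exists, Finset.mem_product, Finset.mem_Icc]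
      constructor
      · rintro (⟨r, hr, rfl⟩ | ⟨k, hk, ⟨s, r⟩, ⟨hs, hr⟩, rfl⟩)
        · obtain ⟨hl, ha⟩ := (ih (m+1) (by omega) r).mp hr
          exact ⟨by simp [leaves, hl]; omega, (avoids_node_leaf r).mpr ha⟩
        · obtain ⟨hls, has⟩ := (ih k (by omega) s).mp hs
          obtain ⟨hlr, har⟩ := (ih (m+1-k) (by omega) r).mp hr
          refine ⟨by simp [leaves, hls, hlr]; omega,
            (avoids_node_node_leaf s r).mpr ⟨has, har⟩⟩
      · rintro ⟨hl, ha⟩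
        match T with
        | .leaf => simp [leaves] at hl
        | .node .leaf r =>
          left
          refine ⟨r, ?_, rfl⟩
          rw [ih (m+1) (by omega) r]
          simp [leaves] at hl
          exact ⟨by omega, (avoids_node_leaf r).mp ha⟩
        | .node (.node .leaf s) r =>
          right
          obtain ⟨has, har⟩ := (avoids_node_node_leaf s r).mp ha
          have hps := leaves_pos s
          have hpr := leaves_pos r
          simp [leaves] at hl
          refine ⟨s.leaves, by omega, ⟨s, r⟩, ⟨?_, ?_⟩, rfl⟩
          · rw [ih s.leaves (by omega) s]; exact ⟨rfl, has⟩
          · rw [ih (m+1-s.leaves) (by omega) r]; exact ⟨by omega, har⟩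
        | .node (.node (.node u v) w) r => exact absurd ha (not_avoids_bad u v w r)

lemma a_eq (n : ℕ) : a n = (avoidF n).card := by
  show Nat.card {T : BTree // T.leaves = n ∧ T.Avoids P} = _
  rw [Nat.card_congr (Equiv.subtypeEquivRight (fun T => (mem_avoidF n T).symm))]
  simp [Nat.card_eq_finsetCard]

lemma card_avoidF (m : ℕ) :
    (avoidF (m+3)).card =
      (avoidF (m+2)).card +
        ∑ k ∈ Finset.Icc 1 (m+1), (avoidF k).card * (avoidF (m+2-k)).card := by
  have hnode : Function.Injective (fun r : BTree => BTree.node .leaf r) := by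
    intro a b h; injection h
  have hpair : Function.Injective (fun p : BTree × BTree => BTree.node (.node .leaf p.1) p.2) := by
    rintro ⟨a, b⟩ ⟨c, d⟩ h
    simp only at h
    injection h with h1 h2
    injection h1 with _ h3
    simp [h2, h3]
  rw [show m+3 = (m+1)+2 from rfl, avoidF]
  rw [Finset.card_union_of_disjoint, Finset.card_image_of_injective _ hnode,
    Finset.card_biUnion]
  · congr 1
    rw [← Finset.sum_attach (Finset.Icc 1 (m+1))]
    refine Finset.sum_congr rfl fun k _ => ?_
    rw [Finset.card_image_of_injective _ hpair, Finset.card_product]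
  · rintro ⟨k, hk⟩ - ⟨k', hk'⟩ - hne
    simp only [Finset.disjoint_left, Finset.mem_image, Finset.mem_product]
    rintro x ⟨⟨s, r⟩, ⟨hs, hr⟩, rfl⟩ ⟨⟨s', r'⟩, ⟨hs', hr'⟩, hx⟩
    simp only at hx
    injection hx with h1 h2
    injection h1 with _ h3
    subst h3
    have e1 := (mem_avoidF k s').mp hs
    have e2 := (mem_avoidF k' s').mp hs'
    exact hne (Subtype.ext (e1.1 ▸ e2.1))
  · simp only [Finset.disjoint_left, Finset.mem_image, Finset.mem_biUnion]
    rintro x ⟨r, hr, rfl⟩ ⟨k, -, ⟨s', r'⟩, -, hx⟩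
    simp only at hx
    injection hx with h1 _
    exact absurd h1 (by simp)

/-- The coefficient recurrence encoded by `x³f² + (x²-1)f + x = 0` for
`f(x) = Σ_{n≥1} a_n x^(2n-1)`. -/
theorem stmt_19 :
    a 1 = 1 ∧ a 2 = 1 ∧
    ∀ n : ℕ, 2 ≤ n →
      a (n + 1) = a n + ∑ k ∈ Finset.Icc 1 (n - 1), a k * a (n - k) := by
  refine ⟨?_, ?_, ?_⟩
  · rw [a_eq]; rw [avoidF]; simp
  · rw [a_eq]; rw [show (2:ℕ) = 0+2 from rfl, avoidF]
    rw [show Finset.Icc 1 0 = ∅ by simp]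
    simp [avoidF]
  · intro n hn
    obtain ⟨m, rfl⟩ : ∃ m, n = m + 2 := ⟨n - 2, by omega⟩
    rw [a_eq, show m+2+1 = m+3 from rfl, card_avoidF, a_eq,
      show m+2-1 = m+1 from rfl]
    congr 1
    exact Finset.sum_congr rfl fun k hk => by rw [a_eq, a_eq]
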